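/- Let Ω ⊂ ℝ² be a bounded Lipschitz domain, β > 0, and define the bilinear form B((u,p),(ũ,p̃)) = (∇u,∇ũ)_{L²} + β(u,ũ)_{L²} + (p,∇·ũ)_{L²} + (∇·u,p̃)_{L²} on X = [H¹₀(Ω)]² × L²₀(Ω). With the norms ‖u‖²_U = ‖u‖²_{H¹} + β‖u‖²_{L²} and ‖p‖²_P = sup_{0≠w∈[H¹₀]²} (p, ∇·w)²_{L²} / (‖w‖²_{H¹} + β‖w‖²_{L²}), the bilinear form is bounded: |B(x, x̃)| ≤ C ‖x‖_X ‖x̃‖_X for all x, x̃ ∈ X, with C independent of β. -/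

import Mathlib

open MeasureTheory
open scoped RealInnerProductSpace

noncomputable section

abbrev E2 := EuclideanSpace ℝ (Fin 2)

/-- Divergence of a vector field on the plane. -/
def divg (w : E2 → E2) (x : E2) : ℝ :=
  fderiv ℝ w x (EuclideanSpace.single (0 : Fin 2) (1 : ℝ)) 0 +
    fderiv ℝ w x (EuclideanSpace.single (1 : Fin 2) (1 : ℝ)) 1

/-- (Smooth representatives of) the space `[H¹₀(Ω)]²`. -/
def H10 (Ω : Set E2) : Set (E2 → E2) :=
  {w | ContDiff ℝ 1 w ∧ HasCompactSupport w ∧ tsupport w ⊆ Ω}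

/-- `‖w‖²_U = ‖w‖²_{H¹} + β ‖w‖²_{L²}`. -/
def uNormSq (Ω : Set E2) (β : ℝ) (w : E2 → E2) : ℝ :=
  (∫ x in Ω, (‖w x‖ ^ 2 + ‖fderiv ℝ w x‖ ^ 2)) + β * ∫ x in Ω, ‖w x‖ ^ 2

/-- Pointwise inner product `∇u : ∇v` of the gradients of two vector fields. -/
def gradInner (u v : E2 → E2) (x : E2) : ℝ :=
  ⟪fderiv ℝ u x (EuclideanSpace.single (0 : Fin 2) (1 : ℝ)),
      fderiv ℝ v x (EuclideanSpace.single (0 : Fin 2) (1 : ℝ))⟫ +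
    ⟪fderiv ℝ u x (EuclideanSpace.single (1 : Fin 2) (1 : ℝ)),
      fderiv ℝ v x (EuclideanSpace.single (1 : Fin 2) (1 : ℝ))⟫

/-- `‖p‖²_P = sup_{0 ≠ w ∈ [H¹₀]²} (p, ∇·w)² / (‖w‖²_{H¹} + β‖w‖²_{L²})`. -/
def pNormSq (Ω : Set E2) (β : ℝ) (p : E2 → ℝ) : ℝ :=
  sSup {r : ℝ | ∃ w ∈ H10 Ω, w ≠ 0 ∧
    r = (∫ x in Ω, p x * divg w x) ^ 2 / uNormSq Ω β w}

/-- The generalized Stokes bilinear form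
`B((u,p),(ũ,p̃)) = (∇u,∇ũ) + β(u,ũ) + (p,∇·ũ) + (∇·u,p̃)`. -/
def Bform (Ω : Set E2) (β : ℝ) (u : E2 → E2) (p : E2 → ℝ) (v : E2 → E2) (q : E2 → ℝ) : ℝ :=
  (∫ x in Ω, gradInner u v x) + β * (∫ x in Ω, ⟪u x, v x⟫) +
    (∫ x in Ω, p x * divg v x) + ∫ x in Ω, divg u x * q x

/-! ### Auxiliary lemmas -/

section Aux

variable {α : Type*} [MeasurableSpace α] {μ : Measure α}

/-- Cauchy–Schwarz for integrals, with no measurability hypotheses. -/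
lemma cs_integral {f g : α → ℝ} (hf : Integrable (fun x => f x ^ 2) μ)
    (hg : Integrable (fun x => g x ^ 2) μ) :
    |∫ x, f x * g x ∂μ| ≤ Real.sqrt (∫ x, f x ^ 2 ∂μ) * Real.sqrt (∫ x, g x ^ 2 ∂μ) := by
  set A := ∫ x, f x ^ 2 ∂μ with hA
  set B := ∫ x, g x ^ 2 ∂μ with hB
  have hA0 : 0 ≤ A := integral_nonneg fun x => sq_nonneg _
  have hB0 : 0 ≤ B := integral_nonneg fun x => sq_nonneg _
  by_cases hint : Integrable (fun x => f x * g x) μ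
  · have key : ∀ ε : ℝ, 0 < ε → |∫ x, f x * g x ∂μ| ≤ (ε * A + B / ε) / 2 := by
      intro ε hε
      have h1 : |∫ x, f x * g x ∂μ| ≤ ∫ x, |f x| * |g x| ∂μ := by
        simpa [Real.norm_eq_abs, abs_mul] using
          norm_integral_le_integral_norm (fun x => f x * g x) (μ := μ)
      refine h1.trans ?_
      have hintabs : Integrable (fun x => |f x| * |g x|) μ := by
        simpa [abs_mul] using hint.abs
      have h2 : ∫ x, |f x| * |g x| ∂μ ≤ ∫ x, (ε * f x ^ 2 + g x ^ 2 / ε) / 2 ∂μ := by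
        refine integral_mono hintabs (((hf.const_mul ε).add (hg.div_const ε)).div_const 2) ?_
        intro x
        simp only
        have h3 : ε * ε⁻¹ = 1 := mul_inv_cancel₀ hε.ne'
        have h4 : f x ^ 2 = |f x| ^ 2 := (sq_abs _).symm
        have h5 : g x ^ 2 = |g x| ^ 2 := (sq_abs _).symm
        rw [h4, h5, div_eq_mul_inv (|g x| ^ 2)]
        nlinarith [sq_nonneg (ε * |f x| - |g x|), abs_nonneg (f x), abs_nonneg (g x),
          mul_pos hε hε, hε, sq_nonneg (|f x| + |g x|)]
      refine h2.trans (le_of_eq ?_)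
      rw [integral_div, integral_add (hf.const_mul ε) (hg.div_const ε),
        integral_const_mul, integral_div]
    rcases eq_or_lt_of_le hA0 with h | hApos
    · have hle : |∫ x, f x * g x ∂μ| ≤ 0 := by
        by_contra hc
        push_neg at hc
        set I := |∫ x, f x * g x ∂μ|
        have hεpos : 0 < (B + 1) / I := div_pos (by linarith) hc
        have := key ((B + 1) / I) hεpos
        rw [← h] at this
        have hBd : B / ((B + 1) / I) = B * I / (B + 1) := by
          field_simp
        rw [hBd] at this
        have hlt : B * I / (B + 1) < 2 * I := by
          rw [div_lt_iff₀ (by linarith : (0:ℝ) < B + 1)]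
          nlinarith
        simp only [mul_zero, zero_add] at this
        linarith
      exact hle.trans (mul_nonneg (Real.sqrt_nonneg _) (Real.sqrt_nonneg _))
    · rcases eq_or_lt_of_le hB0 with h | hBpos
      · have hle : |∫ x, f x * g x ∂μ| ≤ 0 := by
          by_contra hc
          push_neg at hc
          set I := |∫ x, f x * g x ∂μ|
          have hεpos : 0 < I / A := div_pos hc hApos
          have := key (I / A) hεpos
          rw [← h] at this
          have : I ≤ (I / A * A) / 2 := by simpa using this
          rw [div_mul_cancel₀ _ hApos.ne'] at this
          linarith
        exact hle.trans (mul_nonneg (Real.sqrt_nonneg _) (Real.sqrt_nonneg _))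
      · have hsA : 0 < Real.sqrt A := Real.sqrt_pos.mpr hApos
        have hsB : 0 < Real.sqrt B := Real.sqrt_pos.mpr hBpos
        have := key (Real.sqrt B / Real.sqrt A) (div_pos hsB hsA)
        have hAe : Real.sqrt A * Real.sqrt A = A := Real.mul_self_sqrt hA0
        have hBe : Real.sqrt B * Real.sqrt B = B := Real.mul_self_sqrt hB0
        have heq : (Real.sqrt B / Real.sqrt A * A + B / (Real.sqrt B / Real.sqrt A)) / 2
            = Real.sqrt A * Real.sqrt B := by
          field_simp
          nlinarith [hAe, hBe]
        rw [heq] at this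
        exact this
  · rw [integral_undef hint]
    simpa using mul_nonneg (Real.sqrt_nonneg _) (Real.sqrt_nonneg _)

/-- Cauchy–Schwarz for an integral dominated pointwise by `c * (f * g)`. -/
lemma cs_dominated {h f g : α → ℝ} {c : ℝ} (hc : 0 ≤ c)
    (hh : Integrable h μ)
    (hf : Integrable (fun x => f x ^ 2) μ) (hg : Integrable (fun x => g x ^ 2) μ)
    (hfg : Integrable (fun x => f x * g x) μ)
    (hdom : ∀ x, |h x| ≤ c * (f x * g x)) :
    |∫ x, h x ∂μ| ≤ c * (Real.sqrt (∫ x, f x ^ 2 ∂μ) * Real.sqrt (∫ x, g x ^ 2 ∂μ)) := by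
  have h1 : |∫ x, h x ∂μ| ≤ ∫ x, |h x| ∂μ := by
    simpa [Real.norm_eq_abs] using norm_integral_le_integral_norm h (μ := μ)
  have h2 : ∫ x, |h x| ∂μ ≤ ∫ x, c * (f x * g x) ∂μ :=
    integral_mono hh.abs (hfg.const_mul c) hdom
  have h3 : ∫ x, c * (f x * g x) ∂μ = c * ∫ x, f x * g x ∂μ := integral_const_mul _ _
  have h4 : c * ∫ x, f x * g x ∂μ ≤ c * |∫ x, f x * g x ∂μ| :=
    mul_le_mul_of_nonneg_left (le_abs_self _) hc
  have h5 := cs_integral hf hg (μ := μ)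
  calc |∫ x, h x ∂μ| ≤ c * |∫ x, f x * g x ∂μ| := by linarith
    _ ≤ c * (Real.sqrt (∫ x, f x ^ 2 ∂μ) * Real.sqrt (∫ x, g x ^ 2 ∂μ)) :=
        mul_le_mul_of_nonneg_left h5 hc

end Aux

lemma coord_abs_le (y : E2) (i : Fin 2) : |y i| ≤ ‖y‖ := by
  calc |y i| = Real.sqrt ((y i) ^ 2) := (Real.sqrt_sq_eq_abs _).symm
    _ ≤ ‖y‖ := by
        rw [EuclideanSpace.norm_eq]
        refine Real.sqrt_le_sqrt ?_
        have h : (y i) ^ 2 = ‖y i‖ ^ 2 := by simp [Real.norm_eq_abs, sq_abs]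
        rw [h]
        exact Finset.single_le_sum (f := fun j => ‖y j‖ ^ 2) (fun j _ => sq_nonneg _)
          (Finset.mem_univ i)

lemma apply_norm_le (L : E2 →L[ℝ] E2) (i : Fin 2) :
    ‖L (EuclideanSpace.single i (1 : ℝ))‖ ≤ ‖L‖ := by
  have := L.le_opNorm (EuclideanSpace.single i (1 : ℝ))
  simpa [EuclideanSpace.norm_single] using this

lemma divg_abs_le (w : E2 → E2) (x : E2) : |divg w x| ≤ 2 * ‖fderiv ℝ w x‖ := by
  unfold divg
  have h0 := (coord_abs_le (fderiv ℝ w x (EuclideanSpace.single (0 : Fin 2) (1 : ℝ))) 0).trans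
    (apply_norm_le (fderiv ℝ w x) 0)
  have h1 := (coord_abs_le (fderiv ℝ w x (EuclideanSpace.single (1 : Fin 2) (1 : ℝ))) 1).trans
    (apply_norm_le (fderiv ℝ w x) 1)
  calc |fderiv ℝ w x (EuclideanSpace.single (0 : Fin 2) (1 : ℝ)) 0 +
        fderiv ℝ w x (EuclideanSpace.single (1 : Fin 2) (1 : ℝ)) 1|
      ≤ |fderiv ℝ w x (EuclideanSpace.single (0 : Fin 2) (1 : ℝ)) 0| +
        |fderiv ℝ w x (EuclideanSpace.single (1 : Fin 2) (1 : ℝ)) 1| := abs_add_le _ _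
    _ ≤ 2 * ‖fderiv ℝ w x‖ := by linarith

lemma gradInner_abs_le (u v : E2 → E2) (x : E2) :
    |gradInner u v x| ≤ 2 * (‖fderiv ℝ u x‖ * ‖fderiv ℝ v x‖) := by
  unfold gradInner
  have h0 := abs_real_inner_le_norm (fderiv ℝ u x (EuclideanSpace.single (0 : Fin 2) (1 : ℝ)))
    (fderiv ℝ v x (EuclideanSpace.single (0 : Fin 2) (1 : ℝ)))
  have h1 := abs_real_inner_le_norm (fderiv ℝ u x (EuclideanSpace.single (1 : Fin 2) (1 : ℝ)))
    (fderiv ℝ v x (EuclideanSpace.single (1 : Fin 2) (1 : ℝ)))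
  have hu0 := apply_norm_le (fderiv ℝ u x) 0
  have hu1 := apply_norm_le (fderiv ℝ u x) 1
  have hv0 := apply_norm_le (fderiv ℝ v x) 0
  have hv1 := apply_norm_le (fderiv ℝ v x) 1
  have := abs_add_le
    (⟪fderiv ℝ u x (EuclideanSpace.single (0 : Fin 2) (1 : ℝ)),
      fderiv ℝ v x (EuclideanSpace.single (0 : Fin 2) (1 : ℝ))⟫)
    (⟪fderiv ℝ u x (EuclideanSpace.single (1 : Fin 2) (1 : ℝ)),
      fderiv ℝ v x (EuclideanSpace.single (1 : Fin 2) (1 : ℝ))⟫)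
  nlinarith [norm_nonneg (fderiv ℝ u x (EuclideanSpace.single (0 : Fin 2) (1 : ℝ))),
    norm_nonneg (fderiv ℝ v x (EuclideanSpace.single (0 : Fin 2) (1 : ℝ))),
    norm_nonneg (fderiv ℝ u x (EuclideanSpace.single (1 : Fin 2) (1 : ℝ))),
    norm_nonneg (fderiv ℝ v x (EuclideanSpace.single (1 : Fin 2) (1 : ℝ))),
    norm_nonneg (fderiv ℝ u x), norm_nonneg (fderiv ℝ v x)]


/-! ### Lemmas about members of `H10` -/

section H10Lemmas

variable {Ω : Set E2} {β : ℝ} {u v w : E2 → E2}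

lemma divg_continuous (hw : ContDiff ℝ 1 w) : Continuous (divg w) := by
  have h : Continuous (fderiv ℝ w) := hw.continuous_fderiv one_ne_zero
  have h0 : Continuous fun x =>
      (fderiv ℝ w x) (EuclideanSpace.single (0 : Fin 2) (1 : ℝ)) :=
    h.clm_apply continuous_const
  have h1 : Continuous fun x =>
      (fderiv ℝ w x) (EuclideanSpace.single (1 : Fin 2) (1 : ℝ)) :=
    h.clm_apply continuous_const
  exact ((EuclideanSpace.proj (𝕜 := ℝ) (0 : Fin 2)).continuous.comp h0).add
    ((EuclideanSpace.proj (𝕜 := ℝ) (1 : Fin 2)).continuous.comp h1)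

lemma divg_hcs (hw : HasCompactSupport w) : HasCompactSupport (divg w) :=
  (hw.fderiv ℝ).comp_left
    (g := fun L : E2 →L[ℝ] E2 => L (EuclideanSpace.single (0 : Fin 2) (1 : ℝ)) 0 +
      L (EuclideanSpace.single (1 : Fin 2) (1 : ℝ)) 1) (by simp)

lemma int_norm_sq (hw : w ∈ H10 Ω) : IntegrableOn (fun x => ‖w x‖ ^ 2) Ω := by
  have hcont : Continuous fun x => ‖w x‖ ^ 2 := (hw.1.continuous.norm).pow 2
  have hcs : HasCompactSupport fun x => ‖w x‖ ^ 2 :=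
    hw.2.1.comp_left (g := fun y : E2 => ‖y‖ ^ 2) (by simp)
  exact (hcont.integrable_of_hasCompactSupport hcs).integrableOn

lemma int_fderiv_sq (hw : w ∈ H10 Ω) : IntegrableOn (fun x => ‖fderiv ℝ w x‖ ^ 2) Ω := by
  have hcont : Continuous fun x => ‖fderiv ℝ w x‖ ^ 2 :=
    ((hw.1.continuous_fderiv one_ne_zero).norm).pow 2
  have hcs : HasCompactSupport fun x => ‖fderiv ℝ w x‖ ^ 2 :=
    (hw.2.1.fderiv ℝ).comp_left (g := fun L : E2 →L[ℝ] E2 => ‖L‖ ^ 2) (by simp)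
  exact (hcont.integrable_of_hasCompactSupport hcs).integrableOn

lemma int_divg_sq (hw : w ∈ H10 Ω) : IntegrableOn (fun x => divg w x ^ 2) Ω := by
  have hcont : Continuous fun x => divg w x ^ 2 := (divg_continuous hw.1).pow 2
  have hcs : HasCompactSupport fun x => divg w x ^ 2 :=
    (divg_hcs hw.2.1).comp_left (g := fun t : ℝ => t ^ 2) (by simp)
  exact (hcont.integrable_of_hasCompactSupport hcs).integrableOn

lemma int_gradInner (hu : u ∈ H10 Ω) (hv : v ∈ H10 Ω) : IntegrableOn (gradInner u v) Ω := by
  have hcu : Continuous (fderiv ℝ u) := hu.1.continuous_fderiv one_ne_zero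
  have hcv : Continuous (fderiv ℝ v) := hv.1.continuous_fderiv one_ne_zero
  have hcont : Continuous (gradInner u v) :=
    ((hcu.clm_apply continuous_const).inner (hcv.clm_apply continuous_const)).add
      ((hcu.clm_apply continuous_const).inner (hcv.clm_apply continuous_const))
  have hcs : HasCompactSupport (gradInner u v) := by
    refine (hu.2.1.fderiv ℝ).mono' ?_
    intro x hx
    refine subset_closure ?_
    simp only [Function.mem_support] at hx ⊢
    intro h0
    exact hx (by simp [gradInner, h0])
  exact (hcont.integrable_of_hasCompactSupport hcs).integrableOn

lemma int_inner (hu : u ∈ H10 Ω) (hv : v ∈ H10 Ω) :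
    IntegrableOn (fun x => ⟪u x, v x⟫) Ω := by
  have hcont : Continuous fun x => ⟪u x, v x⟫ := hu.1.continuous.inner hv.1.continuous
  have hcs : HasCompactSupport fun x => ⟪u x, v x⟫ := by
    refine hu.2.1.mono' ?_
    intro x hx
    refine subset_closure ?_
    simp only [Function.mem_support] at hx ⊢
    intro h0
    exact hx (by simp [h0])
  exact (hcont.integrable_of_hasCompactSupport hcs).integrableOn

lemma int_norm_mul (hu : u ∈ H10 Ω) (hv : v ∈ H10 Ω) :
    IntegrableOn (fun x => ‖u x‖ * ‖v x‖) Ω := by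
  have hcont : Continuous fun x => ‖u x‖ * ‖v x‖ :=
    hu.1.continuous.norm.mul hv.1.continuous.norm
  have hcs : HasCompactSupport fun x => ‖u x‖ * ‖v x‖ := hu.2.1.norm.mul_right
  exact (hcont.integrable_of_hasCompactSupport hcs).integrableOn

lemma int_fderiv_norm_mul (hu : u ∈ H10 Ω) (hv : v ∈ H10 Ω) :
    IntegrableOn (fun x => ‖fderiv ℝ u x‖ * ‖fderiv ℝ v x‖) Ω := by
  have hcont : Continuous fun x => ‖fderiv ℝ u x‖ * ‖fderiv ℝ v x‖ :=
    (hu.1.continuous_fderiv one_ne_zero).norm.mul (hv.1.continuous_fderiv one_ne_zero).norm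
  have hcs : HasCompactSupport fun x => ‖fderiv ℝ u x‖ * ‖fderiv ℝ v x‖ :=
    (hu.2.1.fderiv ℝ).norm.mul_right
  exact (hcont.integrable_of_hasCompactSupport hcs).integrableOn

lemma uNormSq_nonneg (hw : w ∈ H10 Ω) (hβ : 0 ≤ β) : 0 ≤ uNormSq Ω β w := by
  unfold uNormSq
  have h1 : (0:ℝ) ≤ ∫ x in Ω, (‖w x‖ ^ 2 + ‖fderiv ℝ w x‖ ^ 2) :=
    integral_nonneg fun x => by positivity
  have h2 : (0:ℝ) ≤ ∫ x in Ω, ‖w x‖ ^ 2 := integral_nonneg fun x => by positivity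
  nlinarith

lemma integral_norm_sq_pos (hΩ : IsOpen Ω) (hw : w ∈ H10 Ω) (hne : w ≠ 0) :
    0 < ∫ x in Ω, ‖w x‖ ^ 2 := by
  rw [setIntegral_pos_iff_support_of_nonneg_ae
    (Filter.Eventually.of_forall fun x => by positivity) (int_norm_sq hw)]
  have hsupp : Function.support (fun x => ‖w x‖ ^ 2) = Function.support w := by
    ext x
    simp [Function.mem_support, pow_eq_zero_iff, norm_eq_zero]
  have hopen : IsOpen (Function.support w) := by
    rw [Function.support_eq_preimage]
    exact isOpen_compl_singleton.preimage hw.1.continuous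
  have hsub : Function.support w ⊆ Ω := subset_closure.trans hw.2.2
  rw [hsupp, Set.inter_eq_self_of_subset_left hsub]
  exact hopen.measure_pos volume (Function.support_nonempty_iff.mpr hne)

lemma uNormSq_pos (hΩ : IsOpen Ω) (hw : w ∈ H10 Ω) (hne : w ≠ 0) (hβ : 0 < β) :
    0 < uNormSq Ω β w := by
  have h1 := integral_norm_sq_pos hΩ hw hne
  have h2 : ∫ x in Ω, ‖w x‖ ^ 2 ≤ ∫ x in Ω, (‖w x‖ ^ 2 + ‖fderiv ℝ w x‖ ^ 2) :=
    integral_mono (int_norm_sq hw) ((int_norm_sq hw).add (int_fderiv_sq hw))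
      fun x => le_add_of_nonneg_right (by positivity)
  have h3 : 0 ≤ β * ∫ x in Ω, ‖w x‖ ^ 2 := mul_nonneg hβ.le h1.le
  unfold uNormSq
  linarith

lemma pNormSq_nonneg (hβ : 0 < β) (p : E2 → ℝ) : 0 ≤ pNormSq Ω β p := by
  refine Real.sSup_nonneg ?_
  rintro r ⟨w, hw, hne, rfl⟩
  exact div_nonneg (sq_nonneg _) (uNormSq_nonneg hw hβ.le)

lemma pterm_bound (hΩ : IsOpen Ω) (hβ : 0 < β) {p : E2 → ℝ}
    (hp : IntegrableOn (fun x => p x ^ 2) Ω) (hv : v ∈ H10 Ω) :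
    |∫ x in Ω, p x * divg v x| ≤
      Real.sqrt (pNormSq Ω β p) * Real.sqrt (uNormSq Ω β v) := by
  by_cases hne : v = 0
  · subst hne
    have hd : ∀ x : E2, divg (0 : E2 → E2) x = 0 := by
      intro x
      have h0 : fderiv ℝ (0 : E2 → E2) x = 0 := fderiv_const_apply 0
      simp [divg, h0]
    simp only [hd, mul_zero, integral_zero, abs_zero]
    exact mul_nonneg (Real.sqrt_nonneg _) (Real.sqrt_nonneg _)
  · have hN : 0 < uNormSq Ω β v := uNormSq_pos hΩ hv hne hβ
    have hpnn : (0:ℝ) ≤ ∫ x in Ω, p x ^ 2 := integral_nonneg fun x => sq_nonneg _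
    have hbdd : BddAbove {r : ℝ | ∃ w ∈ H10 Ω, w ≠ 0 ∧
        r = (∫ x in Ω, p x * divg w x) ^ 2 / uNormSq Ω β w} := by
      refine ⟨4 * ∫ x in Ω, p x ^ 2, ?_⟩
      rintro r ⟨w, hw, hwne, rfl⟩
      have hNw : 0 < uNormSq Ω β w := uNormSq_pos hΩ hw hwne hβ
      have hdnn : (0:ℝ) ≤ ∫ x in Ω, divg w x ^ 2 := integral_nonneg fun x => sq_nonneg _
      have hcs := cs_integral (μ := volume.restrict Ω) hp (int_divg_sq hw)
      have hsq : (∫ x in Ω, p x * divg w x) ^ 2 ≤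
          (∫ x in Ω, p x ^ 2) * (∫ x in Ω, divg w x ^ 2) := by
        have h1 : (∫ x in Ω, p x * divg w x) ^ 2 = |∫ x in Ω, p x * divg w x| ^ 2 :=
          (sq_abs _).symm
        rw [h1]
        calc |∫ x in Ω, p x * divg w x| ^ 2
            ≤ (Real.sqrt (∫ x in Ω, p x ^ 2) * Real.sqrt (∫ x in Ω, divg w x ^ 2)) ^ 2 :=
              pow_le_pow_left₀ (abs_nonneg _) hcs 2
          _ = (∫ x in Ω, p x ^ 2) * (∫ x in Ω, divg w x ^ 2) := by
              rw [mul_pow, Real.sq_sqrt hpnn, Real.sq_sqrt hdnn]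
      have hdiv : (∫ x in Ω, divg w x ^ 2) ≤
          4 * ∫ x in Ω, (‖w x‖ ^ 2 + ‖fderiv ℝ w x‖ ^ 2) := by
        have := integral_mono (int_divg_sq hw)
          (((int_norm_sq hw).add (int_fderiv_sq hw)).const_mul 4)
          (fun x => by
            have h1 := divg_abs_le w x
            have h2 : divg w x ^ 2 = |divg w x| ^ 2 := (sq_abs _).symm
            simp only [Pi.add_apply]
            nlinarith [abs_nonneg (divg w x), norm_nonneg (fderiv ℝ w x),
              sq_nonneg (‖w x‖)])
        simpa [integral_const_mul] using this
      have hupper : ∫ x in Ω, (‖w x‖ ^ 2 + ‖fderiv ℝ w x‖ ^ 2) ≤ uNormSq Ω β w := by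
        have h3 : 0 ≤ β * ∫ x in Ω, ‖w x‖ ^ 2 :=
          mul_nonneg hβ.le (integral_nonneg fun x => by positivity)
        unfold uNormSq
        linarith
      rw [div_le_iff₀ hNw]
      nlinarith
    have hmem : (∫ x in Ω, p x * divg v x) ^ 2 / uNormSq Ω β v ∈
        {r : ℝ | ∃ w ∈ H10 Ω, w ≠ 0 ∧
          r = (∫ x in Ω, p x * divg w x) ^ 2 / uNormSq Ω β w} := ⟨v, hv, hne, rfl⟩
    have hle : (∫ x in Ω, p x * divg v x) ^ 2 / uNormSq Ω β v ≤ pNormSq Ω β p :=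
      le_csSup hbdd hmem
    have h2 : (∫ x in Ω, p x * divg v x) ^ 2 ≤ pNormSq Ω β p * uNormSq Ω β v :=
      (div_le_iff₀ hN).mp hle
    calc |∫ x in Ω, p x * divg v x|
        = Real.sqrt ((∫ x in Ω, p x * divg v x) ^ 2) := (Real.sqrt_sq_eq_abs _).symm
      _ ≤ Real.sqrt (pNormSq Ω β p * uNormSq Ω β v) := Real.sqrt_le_sqrt h2
      _ = Real.sqrt (pNormSq Ω β p) * Real.sqrt (uNormSq Ω β v) :=
          Real.sqrt_mul (pNormSq_nonneg hβ p) _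

end H10Lemmas

theorem stmt8 :
    ∃ C > (0 : ℝ), ∀ (Ω : Set E2), IsOpen Ω → Bornology.IsBounded Ω →
      ∀ β > (0 : ℝ), ∀ u v : E2 → E2, u ∈ H10 Ω → v ∈ H10 Ω →
      ∀ p q : E2 → ℝ,
        IntegrableOn (fun x => (p x) ^ 2) Ω → IntegrableOn (fun x => (q x) ^ 2) Ω →
        (∫ x in Ω, p x) = 0 → (∫ x in Ω, q x) = 0 →
        |Bform Ω β u p v q| ≤
          C * Real.sqrt (uNormSq Ω β u + pNormSq Ω β p) *
            Real.sqrt (uNormSq Ω β v + pNormSq Ω β q) := by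
  refine ⟨5, by norm_num, ?_⟩
  intro Ω hΩ _hbd β hβ u v hu hv p q hp hq _hp0 _hq0
  set a := Real.sqrt (uNormSq Ω β u + pNormSq Ω β p) with ha_def
  set b := Real.sqrt (uNormSq Ω β v + pNormSq Ω β q) with hb_def
  have ha : 0 ≤ a := Real.sqrt_nonneg _
  have hb : 0 ≤ b := Real.sqrt_nonneg _
  have hPp : 0 ≤ pNormSq Ω β p := pNormSq_nonneg hβ p
  have hPq : 0 ≤ pNormSq Ω β q := pNormSq_nonneg hβ q
  -- key comparison facts
  have key : ∀ w : E2 → E2, w ∈ H10 Ω →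
      (∫ x in Ω, ‖fderiv ℝ w x‖ ^ 2) ≤ uNormSq Ω β w ∧
      β * (∫ x in Ω, ‖w x‖ ^ 2) ≤ uNormSq Ω β w := by
    intro w hw
    have h1 : (∫ x in Ω, ‖fderiv ℝ w x‖ ^ 2) ≤
        ∫ x in Ω, (‖w x‖ ^ 2 + ‖fderiv ℝ w x‖ ^ 2) :=
      integral_mono (int_fderiv_sq hw) ((int_norm_sq hw).add (int_fderiv_sq hw))
        fun x => le_add_of_nonneg_left (by positivity)
    have h2 : (0:ℝ) ≤ β * ∫ x in Ω, ‖w x‖ ^ 2 :=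
      mul_nonneg hβ.le (integral_nonneg fun x => by positivity)
    have h3 : (0:ℝ) ≤ ∫ x in Ω, (‖w x‖ ^ 2 + ‖fderiv ℝ w x‖ ^ 2) :=
      integral_nonneg fun x => by positivity
    unfold uNormSq
    constructor <;> linarith
  -- the individual square roots are dominated by `a` resp. `b`
  have sUu : Real.sqrt (uNormSq Ω β u) ≤ a := Real.sqrt_le_sqrt (by linarith)
  have sUv : Real.sqrt (uNormSq Ω β v) ≤ b := Real.sqrt_le_sqrt (by linarith)
  have sPp : Real.sqrt (pNormSq Ω β p) ≤ a := by
    refine Real.sqrt_le_sqrt ?_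
    have := uNormSq_nonneg hu hβ.le
    linarith
  have sPq : Real.sqrt (pNormSq Ω β q) ≤ b := by
    refine Real.sqrt_le_sqrt ?_
    have := uNormSq_nonneg hv hβ.le
    linarith
  have sGu : Real.sqrt (∫ x in Ω, ‖fderiv ℝ u x‖ ^ 2) ≤ a :=
    Real.sqrt_le_sqrt (by have := (key u hu).1; linarith)
  have sGv : Real.sqrt (∫ x in Ω, ‖fderiv ℝ v x‖ ^ 2) ≤ b :=
    Real.sqrt_le_sqrt (by have := (key v hv).1; linarith)
  have sBu : Real.sqrt (β * ∫ x in Ω, ‖u x‖ ^ 2) ≤ a :=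
    Real.sqrt_le_sqrt (by have := (key u hu).2; linarith)
  have sBv : Real.sqrt (β * ∫ x in Ω, ‖v x‖ ^ 2) ≤ b :=
    Real.sqrt_le_sqrt (by have := (key v hv).2; linarith)
  -- Term 1: gradient term
  have T1 : |∫ x in Ω, gradInner u v x| ≤ 2 * (a * b) := by
    have h := cs_dominated (μ := volume.restrict Ω) (c := 2) (by norm_num)
      (int_gradInner hu hv) (int_fderiv_sq hu) (int_fderiv_sq hv)
      (int_fderiv_norm_mul hu hv) (fun x => by
        simpa [Real.norm_eq_abs] using gradInner_abs_le u v x)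
    refine h.trans ?_
    have h1 : Real.sqrt (∫ x in Ω, ‖fderiv ℝ u x‖ ^ 2) *
        Real.sqrt (∫ x in Ω, ‖fderiv ℝ v x‖ ^ 2) ≤ a * b :=
      mul_le_mul sGu sGv (Real.sqrt_nonneg _) ha
    linarith
  -- Term 2: β inner term
  have T2 : |β * ∫ x in Ω, ⟪u x, v x⟫| ≤ a * b := by
    have h := cs_dominated (μ := volume.restrict Ω) (c := 1) zero_le_one
      (int_inner hu hv) (int_norm_sq hu) (int_norm_sq hv)
      (int_norm_mul hu hv) (fun x => by
        simpa [one_mul] using abs_real_inner_le_norm (u x) (v x))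
    rw [one_mul] at h
    have hsb : Real.sqrt β * Real.sqrt β = β := Real.mul_self_sqrt hβ.le
    have hBu : Real.sqrt (β * ∫ x in Ω, ‖u x‖ ^ 2)
        = Real.sqrt β * Real.sqrt (∫ x in Ω, ‖u x‖ ^ 2) := Real.sqrt_mul hβ.le _
    have hBv : Real.sqrt (β * ∫ x in Ω, ‖v x‖ ^ 2)
        = Real.sqrt β * Real.sqrt (∫ x in Ω, ‖v x‖ ^ 2) := Real.sqrt_mul hβ.le _
    have habs : |β * ∫ x in Ω, ⟪u x, v x⟫| = β * |∫ x in Ω, ⟪u x, v x⟫| := by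
      rw [abs_mul, abs_of_pos hβ]
    rw [habs]
    calc β * |∫ x in Ω, ⟪u x, v x⟫|
        ≤ β * (Real.sqrt (∫ x in Ω, ‖u x‖ ^ 2) * Real.sqrt (∫ x in Ω, ‖v x‖ ^ 2)) :=
          mul_le_mul_of_nonneg_left h hβ.le
      _ = Real.sqrt (β * ∫ x in Ω, ‖u x‖ ^ 2) * Real.sqrt (β * ∫ x in Ω, ‖v x‖ ^ 2) := by
          rw [hBu, hBv]; ring_nf; rw [Real.sq_sqrt hβ.le]; ring
      _ ≤ a * b := mul_le_mul sBu sBv (Real.sqrt_nonneg _) ha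
  -- Term 3: pressure term (p, div v)
  have T3 : |∫ x in Ω, p x * divg v x| ≤ a * b := by
    refine (pterm_bound hΩ hβ hp hv).trans ?_
    exact mul_le_mul sPp sUv (Real.sqrt_nonneg _) ha
  -- Term 4: pressure term (div u, q)
  have T4 : |∫ x in Ω, divg u x * q x| ≤ a * b := by
    have hcomm : (∫ x in Ω, divg u x * q x) = ∫ x in Ω, q x * divg u x := by
      simp_rw [mul_comm]
    rw [hcomm]
    refine (pterm_bound hΩ hβ hq hu).trans ?_
    calc Real.sqrt (pNormSq Ω β q) * Real.sqrt (uNormSq Ω β u)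
        ≤ b * a := mul_le_mul sPq sUu (Real.sqrt_nonneg _) hb
      _ = a * b := mul_comm _ _
  -- assemble
  unfold Bform
  have habs1 := abs_add_le
    ((∫ x in Ω, gradInner u v x) + β * (∫ x in Ω, ⟪u x, v x⟫) +
      (∫ x in Ω, p x * divg v x)) (∫ x in Ω, divg u x * q x)
  have habs2 := abs_add_le
    ((∫ x in Ω, gradInner u v x) + β * (∫ x in Ω, ⟪u x, v x⟫))
    (∫ x in Ω, p x * divg v x)
  have habs3 := abs_add_le (∫ x in Ω, gradInner u v x) (β * ∫ x in Ω, ⟪u x, v x⟫)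
  calc |(∫ x in Ω, gradInner u v x) + β * (∫ x in Ω, ⟪u x, v x⟫) +
      (∫ x in Ω, p x * divg v x) + ∫ x in Ω, divg u x * q x|
      ≤ 5 * (a * b) := by linarith
    _ = 5 * a * b := by ring
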